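/- arXiv:1708.07257 — 2 statements merged into one kernel-verified Lean document; each statement's English description precedes it below -/
import Mathlib

section
/- For η ∈ [1/2, 1] and N_S ≥ 0, the function N_S ↦ g(η·N_S) − g((1−η)·N_S) is monotone nondecreasing in N_S, where g(x) = (x+1)·log₂(x+1) − x·log₂(x) and g(0) = 0. -/
open Real Set

/-- `mfun x = x * log (x+1) - x * log x`, i.e. `x * log ((x+1)/x)`. -/
noncomputable def mfun (x : ℝ) : ℝ := x * Real.log (x + 1) - x * Real.log x

lemma mfun_hasDeriv {x : ℝ} (hx : 0 < x) :
    HasDerivAt mfun (Real.log (x + 1) - Real.log x - (x + 1)⁻¹) x := by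
  have hx1 : x + 1 ≠ 0 := by linarith
  have h1 : HasDerivAt (fun x : ℝ => x * Real.log (x + 1))
      (1 * Real.log (x + 1) + x * ((x + 1)⁻¹ * 1)) x :=
    (hasDerivAt_id x).mul (by have := (Real.hasDerivAt_log hx1).comp x ((hasDerivAt_id x).add_const 1); exact this)
  have h2 : HasDerivAt (fun x : ℝ => x * Real.log x) (Real.log x + 1) x :=
    Real.hasDerivAt_mul_log hx.ne'
  have h := h1.sub h2
  have e : 1 * Real.log (x + 1) + x * ((x + 1)⁻¹ * 1) - (Real.log x + 1)
      = Real.log (x + 1) - Real.log x - (x + 1)⁻¹ := by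
    field_simp
    ring
  rw [e] at h
  exact h

lemma mfun_mono : MonotoneOn mfun (Ici (0 : ℝ)) := by
  apply monotoneOn_of_deriv_nonneg (convex_Ici 0)
  · have h1 : ContinuousOn (fun x : ℝ => x * Real.log (x + 1)) (Ici 0) :=
      continuousOn_id.mul (((continuous_id.add continuous_const).continuousOn).log
        (fun x hx => by
          have h0 : (0:ℝ) ≤ x := hx
          show x + 1 ≠ 0
          intro hc
          linarith))
    exact h1.sub Real.continuous_mul_log.continuousOn
  · rw [interior_Ici]
    intro x hx
    exact (mfun_hasDeriv hx).differentiableAt.differentiableWithinAt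
  · rw [interior_Ici]
    intro x hx
    have hx' : (0:ℝ) < x := hx
    rw [(mfun_hasDeriv hx').deriv]
    have hx1 : (0:ℝ) < x + 1 := by linarith
    have key : Real.log (x / (x + 1)) ≤ x / (x + 1) - 1 :=
      Real.log_le_sub_one_of_pos (by positivity)
    rw [Real.log_div hx.ne' hx1.ne'] at key
    have e : x / (x + 1) - 1 = -(x + 1)⁻¹ := by field_simp; ring
    rw [e] at key
    linarith

lemma psi_hasDeriv {t N : ℝ} (ht : 0 ≤ t) (hN : 0 < N) :
    HasDerivAt (fun N : ℝ => (t * N + 1) * Real.log (t * N + 1) - t * N * Real.log (t * N))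
      (t * (Real.log (t * N + 1) - Real.log (t * N))) N := by
  rcases eq_or_lt_of_le ht with h0 | h0
  · simp only [← h0, zero_mul, zero_add, Real.log_one, mul_zero, sub_zero, one_mul, mul_one,
      sub_self]
    exact hasDerivAt_const N 0
  · have htN : 0 < t * N := mul_pos h0 hN
    have htN1 : t * N + 1 ≠ 0 := by linarith
    have hin1 : HasDerivAt (fun N : ℝ => t * N + 1) t N := by
      simpa using ((hasDerivAt_id N).const_mul t).add_const 1
    have hin2 : HasDerivAt (fun N : ℝ => t * N) t N := by
      simpa using (hasDerivAt_id N).const_mul t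
    have h1 : HasDerivAt (fun N : ℝ => (t * N + 1) * Real.log (t * N + 1))
        ((Real.log (t * N + 1) + 1) * t) N :=
      by have := (Real.hasDerivAt_mul_log htN1).comp N hin1; exact this
    have h2 : HasDerivAt (fun N : ℝ => t * N * Real.log (t * N))
        ((Real.log (t * N) + 1) * t) N :=
      (Real.hasDerivAt_mul_log htN.ne').comp N hin2
    have h := h1.sub h2
    have e : (Real.log (t * N + 1) + 1) * t - (Real.log (t * N) + 1) * t
        = t * (Real.log (t * N + 1) - Real.log (t * N)) := by ring
    rw [e] at h
    exact h

lemma psi_cont (t : ℝ) :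
    Continuous (fun N : ℝ => (t * N + 1) * Real.log (t * N + 1) - t * N * Real.log (t * N)) := by
  have h1 : Continuous (fun N : ℝ => (t * N + 1) * Real.log (t * N + 1)) :=
    Real.continuous_mul_log.comp ((continuous_const.mul continuous_id).add continuous_const)
  have h2 : Continuous (fun N : ℝ => t * N * Real.log (t * N)) :=
    Real.continuous_mul_log.comp (continuous_const.mul continuous_id)
  exact h1.sub h2

/-- For η ∈ [1/2, 1], the map N_S ↦ g(η N_S) − g((1−η) N_S) is monotone
    nondecreasing on [0, ∞), where g(x) = (x+1)·log₂(x+1) − x·log₂ x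
    (with g(0) = 0, which the formula gives since Real.logb 2 0 = 0). -/
theorem pureLoss_capacity_monotone (η : ℝ) (hη₁ : 1 / 2 ≤ η) (hη₂ : η ≤ 1) :
    MonotoneOn
      (fun N : ℝ =>
        ((η * N + 1) * Real.logb 2 (η * N + 1) - η * N * Real.logb 2 (η * N))
          - (((1 - η) * N + 1) * Real.logb 2 ((1 - η) * N + 1)
              - (1 - η) * N * Real.logb 2 ((1 - η) * N)))
      (Set.Ici (0 : ℝ)) := by
  have hηpos : (0:ℝ) < η := lt_of_lt_of_le (by norm_num) hη₁
  have ht2 : (0:ℝ) ≤ 1 - η := by linarith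
  have hG : MonotoneOn (fun N : ℝ =>
      ((η * N + 1) * Real.log (η * N + 1) - η * N * Real.log (η * N))
        - (((1 - η) * N + 1) * Real.log ((1 - η) * N + 1)
            - (1 - η) * N * Real.log ((1 - η) * N))) (Ici 0) := by
    apply monotoneOn_of_deriv_nonneg (convex_Ici 0)
    · exact ((psi_cont η).sub (psi_cont (1 - η))).continuousOn
    · rw [interior_Ici]
      intro x hx
      exact ((psi_hasDeriv hηpos.le hx).sub
        (psi_hasDeriv ht2 hx)).differentiableAt.differentiableWithinAt
    · rw [interior_Ici]
      intro x hx
      have hx' : (0:ℝ) < x := hx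
      rw [((psi_hasDeriv hηpos.le hx').fun_sub (psi_hasDeriv ht2 hx')).deriv]
      have hle : (1 - η) * x ≤ η * x := by nlinarith
      have hm := mfun_mono (mem_Ici.mpr (mul_nonneg ht2 hx'.le))
        (mem_Ici.mpr (mul_nonneg hηpos.le hx'.le)) hle
      have key : x * (η * (Real.log (η * x + 1) - Real.log (η * x))
          - (1 - η) * (Real.log ((1 - η) * x + 1) - Real.log ((1 - η) * x)))
          = mfun (η * x) - mfun ((1 - η) * x) := by
        simp only [mfun]; ring
      nlinarith [hx', sub_nonneg.mpr hm, key]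
  have hE : (fun N : ℝ =>
        ((η * N + 1) * Real.logb 2 (η * N + 1) - η * N * Real.logb 2 (η * N))
          - (((1 - η) * N + 1) * Real.logb 2 ((1 - η) * N + 1)
              - (1 - η) * N * Real.logb 2 ((1 - η) * N)))
      = fun N : ℝ =>
        (((η * N + 1) * Real.log (η * N + 1) - η * N * Real.log (η * N))
          - (((1 - η) * N + 1) * Real.log ((1 - η) * N + 1)
              - (1 - η) * N * Real.log ((1 - η) * N))) * (Real.log 2)⁻¹ := by
    funext N
    simp only [Real.logb, div_eq_mul_inv]
    ring
  rw [hE]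
  intro a ha b hb hab
  exact mul_le_mul_of_nonneg_right (hG ha hb hab)
    (inv_nonneg.mpr (Real.log_nonneg (by norm_num)))
end

section
/- For G > 1, the function N_S ↦ g(G·N_S + G − 1) − g((G−1)(N_S + 1)) is monotone nondecreasing on [0, ∞), where g(x) = (x+1)log₂(x+1) − x·log₂(x) with g(0)=0. -/
/-- For G > 1, the map N ↦ g(GN + G − 1) − g((G−1)(N+1)) is monotone
    nondecreasing on [0, ∞), where g(x) = (x+1)·log₂(x+1) − x·log₂ x. -/
theorem amplifier_capacity_monotone (G : ℝ) (hG : 1 < G) :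
    MonotoneOn
      (fun N : ℝ =>
        ((G * N + G - 1 + 1) * Real.logb 2 (G * N + G - 1 + 1)
            - (G * N + G - 1) * Real.logb 2 (G * N + G - 1))
          - (((G - 1) * (N + 1) + 1) * Real.logb 2 ((G - 1) * (N + 1) + 1)
              - (G - 1) * (N + 1) * Real.logb 2 ((G - 1) * (N + 1))))
      (Set.Ici (0 : ℝ)) := by
  have hc : (0:ℝ) < Real.log 2 := Real.log_pos one_lt_two
  set f : ℝ → ℝ := fun N =>
        ((G * N + G - 1 + 1) * Real.logb 2 (G * N + G - 1 + 1)
            - (G * N + G - 1) * Real.logb 2 (G * N + G - 1))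
          - (((G - 1) * (N + 1) + 1) * Real.logb 2 ((G - 1) * (N + 1) + 1)
              - (G - 1) * (N + 1) * Real.logb 2 ((G - 1) * (N + 1))) with hf
  have key : ∀ N : ℝ, 0 ≤ N → HasDerivAt f
      ((G * Real.log (G*N+G-1+1) - G * Real.log (G*N+G-1)
        - ((G-1) * Real.log ((G-1)*(N+1)+1) - (G-1) * Real.log ((G-1)*(N+1))))
        / Real.log 2) N := by
    intro N hN
    have ha : 0 < G*N+G-1 := by nlinarith
    have ha1 : 0 < G*N+G-1+1 := by linarith
    have hb : 0 < (G-1)*(N+1) := by nlinarith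
    have hb1 : 0 < (G-1)*(N+1)+1 := by linarith
    have h1 : HasDerivAt (fun N : ℝ => G*N+G-1) G N := by
      simpa using (((hasDerivAt_id N).const_mul G).add_const G).sub_const 1
    have h1' : HasDerivAt (fun N : ℝ => G*N+G-1+1) G N := h1.add_const 1
    have h2 : HasDerivAt (fun N : ℝ => (G-1)*(N+1)) (G-1) N := by
      simpa using ((hasDerivAt_id N).add_const 1).const_mul (G-1)
    have h2' : HasDerivAt (fun N : ℝ => (G-1)*(N+1)+1) (G-1) N := h2.add_const 1
    have t1 := (h1'.mul (h1'.log ha1.ne')).div_const (Real.log 2)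
    have t2 := (h1.mul (h1.log ha.ne')).div_const (Real.log 2)
    have t3 := (h2'.mul (h2'.log hb1.ne')).div_const (Real.log 2)
    have t4 := (h2.mul (h2.log hb.ne')).div_const (Real.log 2)
    have hcomb := (t1.sub t2).sub (t3.sub t4)
    have heq : (G * Real.log (G*N+G-1+1) + (G*N+G-1+1) * (G/(G*N+G-1+1))) / Real.log 2
        - (G * Real.log (G*N+G-1) + (G*N+G-1) * (G/(G*N+G-1))) / Real.log 2
        - (((G-1) * Real.log ((G-1)*(N+1)+1) + ((G-1)*(N+1)+1) * ((G-1)/((G-1)*(N+1)+1))) / Real.log 2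
          - ((G-1) * Real.log ((G-1)*(N+1)) + ((G-1)*(N+1)) * ((G-1)/((G-1)*(N+1)))) / Real.log 2)
        = (G * Real.log (G*N+G-1+1) - G * Real.log (G*N+G-1)
        - ((G-1) * Real.log ((G-1)*(N+1)+1) - (G-1) * Real.log ((G-1)*(N+1))))
        / Real.log 2 := by
      rw [mul_div_cancel₀ _ ha1.ne', mul_div_cancel₀ _ ha.ne', mul_div_cancel₀ _ hb1.ne', mul_div_cancel₀ _ hb.ne']
      ring
    rw [heq] at hcomb
    rw [hf]
    simp only [Real.logb, ← mul_div_assoc]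
    exact hcomb
  have hderiv : ∀ N ∈ interior (Set.Ici (0:ℝ)), 0 ≤ deriv f N := by
    intro N hN
    rw [interior_Ici] at hN
    have hN0 : (0:ℝ) ≤ N := le_of_lt hN
    rw [(key N hN0).deriv]
    have ha : 0 < G*N+G-1 := by nlinarith
    have ha1 : 0 < G*N+G-1+1 := by linarith
    have hb : 0 < (G-1)*(N+1) := by nlinarith
    have hb1 : 0 < (G-1)*(N+1)+1 := by linarith
    apply div_nonneg _ hc.le
    -- lower bound: log(a+1) - log a ≥ 1/(a+1)
    have l1 : 1/(G*N+G-1+1) ≤ Real.log (G*N+G-1+1) - Real.log (G*N+G-1) := by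
      have h := Real.log_le_sub_one_of_pos (div_pos ha ha1)
      rw [Real.log_div ha.ne' ha1.ne'] at h
      have e : (G*N+G-1)/(G*N+G-1+1) = 1 - 1/(G*N+G-1+1) := by
        rw [eq_sub_iff_add_eq, ← add_div, div_self ha1.ne']
      rw [e] at h; linarith
    have l2 : Real.log ((G-1)*(N+1)+1) - Real.log ((G-1)*(N+1)) ≤ 1/((G-1)*(N+1)) := by
      have h := Real.log_le_sub_one_of_pos (div_pos hb1 hb)
      rw [Real.log_div hb1.ne' hb.ne'] at h
      have e : ((G-1)*(N+1)+1)/((G-1)*(N+1)) = 1 + 1/((G-1)*(N+1)) := by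
        rw [add_div, div_self hb.ne']
      rw [e] at h; linarith
    have hGpos : (0:ℝ) < G := by linarith
    have i1 : G * (1/(G*N+G-1+1)) ≤ G * (Real.log (G*N+G-1+1) - Real.log (G*N+G-1)) :=
      mul_le_mul_of_nonneg_left l1 hGpos.le
    have i2 : (G-1) * (Real.log ((G-1)*(N+1)+1) - Real.log ((G-1)*(N+1)))
        ≤ (G-1) * (1/((G-1)*(N+1))) :=
      mul_le_mul_of_nonneg_left l2 (by linarith)
    have e1 : G * (1/(G*N+G-1+1)) = (G-1) * (1/((G-1)*(N+1))) := by
      have : G - 1 ≠ 0 := by linarith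
      have : N + 1 ≠ 0 := by rintro h; rw [h] at hb; simp at hb
      field_simp
      ring
    linarith
  apply monotoneOn_of_deriv_nonneg (convex_Ici 0)
    (fun x hx => (key x hx).continuousAt.continuousWithinAt)
    (fun x hx => by
      rw [interior_Ici] at hx
      exact (key x (le_of_lt hx)).differentiableAt.differentiableWithinAt)
    hderiv
end
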